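/- There exist universal constants c0, c1 > 0 and C > 0 such that the following holds. Let n, N ≥ 9 be integers, m = ⌊(N+1)/10⌋, and ρ_(1) ≤ … ≤ ρ_(N+1) reals with every ρ_(t) ≥ 1. Set ε = min_{t ∈ {1,…,N+1}} (c1·N/(n·t²))^{1/(2·ρ_(t))}, let t*_p attain this minimum, and assume ε ∈ (0, 1/2), t*_p ≥ √(N/n). Suppose #{ s ∈ {1,…,m} : ρ_(s) < 2·ρ_(t*_p)·ln(n·N)/ln(n·(t*_p)²/N) } ≤ c0/(n·ε²·e^{n·ε²}). For σ ∈ {0,1}, let Π^σ be the product, over t = 1,…,N+1, of the uniform mixture over s ∈ {1,…,m} of the Binomial(n, 1/2 + (1/2)·(2σ−1)·ε^{ρ_(s)}) distributions. Then D_KL(Π^1 ‖ Π^0) ≤ C. -/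

import Mathlib

open scoped Classical

/-- The probability mass function of the Binomial(n, p) distribution at `k`. -/
noncomputable def binomPMF (n : ℕ) (p : ℝ) (k : ℕ) : ℝ :=
  (n.choose k : ℝ) * p ^ k * (1 - p) ^ (n - k)

/-- The uniform mixture, over `s ∈ {1,…,m}` with `m = ⌊(N+1)/10⌋`, of the
`Binomial(n, 1/2 + (1/2)(2σ−1)ε^{ρ_(s)})` laws, evaluated at a count `k`;
the index `s ∈ {1,…,m}` is encoded as `s : Fin (N+1)` with `(s : ℕ) < m`. -/
noncomputable def mixBinom (n N : ℕ) (ε : ℝ) (ρ : Fin (N+1) → ℝ) (σ : Bool)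
    (k : ℕ) : ℝ :=
  ((((N+1)/10 : ℕ) : ℝ))⁻¹ *
    ∑ s ∈ Finset.univ.filter (fun s : Fin (N+1) => (s : ℕ) < (N+1)/10),
      binomPMF n (1/2 + (1/2) * (if σ then (1:ℝ) else -1) * ε ^ (ρ s)) k

lemma binom_sum (n : ℕ) (p : ℝ) :
    ∑ k ∈ Finset.range (n+1), binomPMF n p k = 1 := by
  have h := add_pow p (1-p) n
  simp only [add_sub_cancel, one_pow] at h
  rw [Finset.sum_congr rfl (fun k _ => show binomPMF n p k
      = p ^ k * (1-p) ^ (n-k) * (n.choose k : ℝ) by unfold binomPMF; ring)]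
  exact h.symm

lemma binom_pos {n k : ℕ} {p : ℝ} (hk : k ≤ n) (h0 : 0 < p) (h1 : p < 1) :
    0 < binomPMF n p k := by
  unfold binomPMF
  have hc : 0 < (n.choose k : ℝ) := by exact_mod_cast Nat.choose_pos hk
  have h1p : 0 < 1 - p := by linarith
  exact mul_pos (mul_pos hc (pow_pos h0 _)) (pow_pos h1p _)

lemma binom_mean (n : ℕ) (p : ℝ) (hn : 1 ≤ n) :
    ∑ k ∈ Finset.range (n+1), (k : ℝ) * binomPMF n p k = n * p := by
  obtain ⟨m, rfl⟩ := Nat.exists_eq_add_of_le hn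
  rw [Finset.sum_range_succ']
  simp only [Nat.cast_zero, zero_mul, add_zero]
  have key : ∀ k, k ≤ m → ((k+1 : ℕ) : ℝ) * binomPMF (1+m) p (k+1)
      = ((1+m : ℕ) : ℝ) * p * binomPMF m p k := by
    intro k hk
    unfold binomPMF
    have hc : ((k+1 : ℕ) : ℝ) * ((1+m).choose (k+1) : ℝ) = ((1+m : ℕ) : ℝ) * (m.choose k : ℝ) := by
      have := Nat.add_one_mul_choose_eq m k
      have : (m+1) * m.choose k = (m+1).choose (k+1) * (k+1) := this
      have h2 : ((m+1) * m.choose k : ℕ) = ((m+1).choose (k+1) * (k+1) : ℕ) := this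
      push_cast [Nat.add_comm 1 m]
      have := congrArg (fun x : ℕ => (x : ℝ)) h2
      push_cast at this
      linarith
    have hsub : (1 + m) - (k+1) = m - k := by omega
    rw [hsub]
    calc ((k+1:ℕ):ℝ) * ((((1+m).choose (k+1) : ℝ)) * p ^ (k+1) * (1-p) ^ (m-k))
        = (((k+1:ℕ):ℝ) * ((1+m).choose (k+1) : ℝ)) * p ^ (k+1) * (1-p)^(m-k) := by ring
      _ = (((1+m:ℕ):ℝ) * (m.choose k : ℝ)) * p ^ (k+1) * (1-p)^(m-k) := by rw [hc]
      _ = ((1+m:ℕ):ℝ) * p * ((m.choose k : ℝ) * p ^ k * (1-p)^(m-k)) := by ring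
  calc ∑ k ∈ Finset.range (1+m), ((k+1 : ℕ):ℝ) * binomPMF (1+m) p (k+1)
      = ∑ k ∈ Finset.range (1+m), ((1+m : ℕ) : ℝ) * p * binomPMF m p k := by
        apply Finset.sum_congr rfl
        intro k hk
        exact key k (by simpa [Nat.add_comm] using Nat.lt_add_one_iff.mp (by simpa [Nat.add_comm] using Finset.mem_range.mp hk))
    _ = ((1+m : ℕ):ℝ) * p * ∑ k ∈ Finset.range (m+1), binomPMF m p k := by
        rw [← Finset.mul_sum, Nat.add_comm 1 m]
    _ = ((1+m : ℕ):ℝ) * p := by rw [binom_sum]; ring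

lemma kl_binom (n : ℕ) {δ : ℝ} (h0 : 0 < δ) (h1 : δ ≤ 1/4) :
    ∑ k ∈ Finset.range (n+1), binomPMF n (1/2+δ) k *
      Real.log (binomPMF n (1/2+δ) k / binomPMF n (1/2-δ) k) ≤ 16 * n * δ^2 := by
  rcases Nat.eq_zero_or_pos n with hn | hn
  · subst hn
    simp [binomPMF]
  have hp0 : (0:ℝ) < 1/2 + δ := by linarith
  have hp1 : (1/2 + δ : ℝ) < 1 := by linarith
  have hq0 : (0:ℝ) < 1/2 - δ := by linarith
  have hq1 : (1/2 - δ : ℝ) < 1 := by linarith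
  set L : ℝ := Real.log (1/2 + δ) - Real.log (1/2 - δ) with hL
  have hlog : ∀ k ∈ Finset.range (n+1),
      Real.log (binomPMF n (1/2+δ) k / binomPMF n (1/2-δ) k)
        = (2 * (k:ℝ) - n) * L := by
    intro k hk
    have hkn : k ≤ n := Nat.lt_add_one_iff.mp (Finset.mem_range.mp hk)
    have hC : (0:ℝ) < (n.choose k : ℝ) := by exact_mod_cast Nat.choose_pos hkn
    have e1 : (1:ℝ) - (1/2 + δ) = 1/2 - δ := by ring
    have e2 : (1:ℝ) - (1/2 - δ) = 1/2 + δ := by ring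
    unfold binomPMF
    rw [e1, e2]
    rw [Real.log_div (by positivity) (by positivity),
      Real.log_mul (by positivity) (by positivity),
      Real.log_mul (by positivity) (by positivity),
      Real.log_mul (by positivity) (by positivity),
      Real.log_mul (by positivity) (by positivity),
      Real.log_pow, Real.log_pow, Real.log_pow, Real.log_pow]
    have hcast : ((n - k : ℕ) : ℝ) = (n:ℝ) - (k:ℝ) := by
      exact Nat.cast_sub hkn
    rw [hcast, hL]
    ring
  have hsum : ∑ k ∈ Finset.range (n+1), binomPMF n (1/2+δ) k *
      Real.log (binomPMF n (1/2+δ) k / binomPMF n (1/2-δ) k)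
      = 2 * n * δ * L := by
    rw [Finset.sum_congr rfl (fun k hk => by rw [hlog k hk])]
    have expand : ∀ k : ℕ, binomPMF n (1/2+δ) k * ((2 * (k:ℝ) - n) * L)
        = 2 * L * ((k:ℝ) * binomPMF n (1/2+δ) k) - (n:ℝ) * L * binomPMF n (1/2+δ) k := by
      intro k; ring
    rw [Finset.sum_congr rfl (fun k _ => expand k), Finset.sum_sub_distrib,
      ← Finset.mul_sum, ← Finset.mul_sum, binom_mean n _ hn, binom_sum]
    ring
  rw [hsum]
  have hLle : L ≤ 8 * δ := by
    have := Real.log_le_sub_one_of_pos (show (0:ℝ) < (1/2+δ)/(1/2-δ) by positivity)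
    rw [← Real.log_div (by positivity) (by positivity)] at hL
    have hdiv : (1/2 + δ)/(1/2 - δ) - 1 = 2*δ/(1/2 - δ) := by
      rw [div_sub_one (ne_of_gt hq0)]
      ring_nf
    have h2 : 2*δ/(1/2-δ) ≤ 8*δ := by
      rw [div_le_iff₀ hq0]
      nlinarith
    calc L = Real.log ((1/2+δ)/(1/2-δ)) := hL
      _ ≤ (1/2+δ)/(1/2-δ) - 1 := this
      _ = 2*δ/(1/2-δ) := hdiv
      _ ≤ 8*δ := h2
  have hn' : (0:ℝ) ≤ (n:ℝ) := Nat.cast_nonneg n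
  nlinarith [mul_le_mul_of_nonneg_left hLle (show (0:ℝ) ≤ 2*n*δ by positivity)]

lemma log_sum_ineq {ι : Type*} (t : Finset ι) (ht : t.Nonempty) (a b : ι → ℝ)
    (ha : ∀ i ∈ t, 0 < a i) (hb : ∀ i ∈ t, 0 < b i) :
    (∑ i ∈ t, a i) * Real.log ((∑ i ∈ t, a i) / (∑ i ∈ t, b i))
      ≤ ∑ i ∈ t, a i * Real.log (a i / b i) := by
  have hA : 0 < ∑ i ∈ t, a i := Finset.sum_pos ha ht
  have hB : 0 < ∑ i ∈ t, b i := Finset.sum_pos hb ht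
  set A := ∑ i ∈ t, a i with hAdef
  set B := ∑ i ∈ t, b i with hBdef
  have hw1 : ∑ i ∈ t, a i / A = 1 := by
    rw [← Finset.sum_div, ← hAdef, div_self hA.ne']
  have jensen := ConcaveOn.le_map_sum (t := t) (w := fun i => a i / A)
    (p := fun i => b i / a i) (strictConcaveOn_log_Ioi.concaveOn)
    (fun i hi => div_nonneg (ha i hi).le hA.le) hw1
    (fun i hi => Set.mem_Ioi.mpr (div_pos (hb i hi) (ha i hi)))
  have hpt : ∑ i ∈ t, (a i / A) • (b i / a i) = B / A := by
    simp only [smul_eq_mul]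
    rw [Finset.sum_congr rfl (fun i hi => show (a i / A) * (b i / a i) = b i / A by
      have := (ha i hi).ne'
      field_simp)]
    rw [← Finset.sum_div]
  rw [hpt] at jensen
  have h2 : ∑ i ∈ t, a i * Real.log (b i / a i) ≤ A * Real.log (B / A) := by
    have := mul_le_mul_of_nonneg_left jensen hA.le
    rw [Finset.mul_sum] at this
    calc ∑ i ∈ t, a i * Real.log (b i / a i)
        = ∑ i ∈ t, A * ((a i / A) • Real.log (b i / a i)) := by
          apply Finset.sum_congr rfl
          intro i hi
          rw [smul_eq_mul]
          field_simp
      _ ≤ A * Real.log (B / A) := this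
  have e1 : A * Real.log (A / B) = - (A * Real.log (B / A)) := by
    rw [Real.log_div hA.ne' hB.ne', Real.log_div hB.ne' hA.ne']; ring
  have e2 : ∑ i ∈ t, a i * Real.log (a i / b i)
      = - ∑ i ∈ t, a i * Real.log (b i / a i) := by
    rw [← Finset.sum_neg_distrib]
    apply Finset.sum_congr rfl
    intro i hi
    rw [Real.log_div (ha i hi).ne' (hb i hi).ne', Real.log_div (hb i hi).ne' (ha i hi).ne']
    ring
  rw [e1, e2]
  linarith

lemma tensorize {n N : ℕ} (f g : Fin (n+1) → ℝ)
    (hf : ∀ j, 0 < f j) (hg : ∀ j, 0 < g j) (hf1 : ∑ j, f j = 1) :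
    ∑ k : Fin (N+1) → Fin (n+1),
        (∏ t, f (k t)) * Real.log ((∏ t, f (k t)) / (∏ t, g (k t)))
      = (N+1 : ℝ) * ∑ j, f j * Real.log (f j / g j) := by
  classical
  set K1 : ℝ := ∑ j, f j * Real.log (f j / g j) with hK1
  have hfprodpos : ∀ k : Fin (N+1) → Fin (n+1), 0 < ∏ t, f (k t) :=
    fun k => Finset.prod_pos fun t _ => hf _
  have hgprodpos : ∀ k : Fin (N+1) → Fin (n+1), 0 < ∏ t, g (k t) :=
    fun k => Finset.prod_pos fun t _ => hg _
  have hlogprod : ∀ k : Fin (N+1) → Fin (n+1),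
      Real.log ((∏ t, f (k t)) / (∏ t, g (k t)))
        = ∑ t, Real.log (f (k t) / g (k t)) := by
    intro k
    rw [Real.log_div (hfprodpos k).ne' (hgprodpos k).ne',
      Real.log_prod (fun t _ => (hf (k t)).ne'),
      Real.log_prod (fun t _ => (hg (k t)).ne'),
      ← Finset.sum_sub_distrib]
    exact Finset.sum_congr rfl fun t _ => (Real.log_div (hf _).ne' (hg _).ne').symm
  have hper : ∀ t0 : Fin (N+1),
      (∑ k : Fin (N+1) → Fin (n+1), (∏ t, f (k t)) * Real.log (f (k t0) / g (k t0))) = K1 := by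
    intro t0
    set F : Fin (N+1) → Fin (n+1) → ℝ :=
      fun t j => if t = t0 then f j * Real.log (f j / g j) else f j with hF
    have hFk : ∀ k : Fin (N+1) → Fin (n+1),
        (∏ t, f (k t)) * Real.log (f (k t0) / g (k t0)) = ∏ t, F t (k t) := by
      intro k
      rw [hF]
      rw [Finset.prod_eq_mul_prod_sdiff_singleton_of_mem (Finset.mem_univ t0)
        (fun t => if t = t0 then f (k t) * Real.log (f (k t) / g (k t)) else f (k t)),
        Finset.prod_eq_mul_prod_sdiff_singleton_of_mem (Finset.mem_univ t0) (fun t => f (k t)),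
        if_pos rfl,
        Finset.prod_congr rfl (fun t ht => if_neg (by
          have := (Finset.mem_sdiff.mp ht).2
          simpa using this))]
      ring
    rw [Finset.sum_congr rfl (fun k _ => hFk k), ← Fintype.prod_sum F]
    have hFt : ∀ t, ∑ j, F t j = if t = t0 then K1 else 1 := by
      intro t
      by_cases h : t = t0 <;> simp [hF, h, hf1, hK1]
    rw [Finset.prod_congr rfl (fun t _ => hFt t),
      Finset.prod_ite_eq' Finset.univ t0 (fun _ => K1)]
    simp
  calc ∑ k : Fin (N+1) → Fin (n+1),
        (∏ t, f (k t)) * Real.log ((∏ t, f (k t)) / (∏ t, g (k t)))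
      = ∑ k : Fin (N+1) → Fin (n+1), ∑ t0, (∏ t, f (k t)) * Real.log (f (k t0) / g (k t0)) := by
        refine Finset.sum_congr rfl fun k _ => ?_
        rw [hlogprod k, Finset.mul_sum]
    _ = ∑ t0, ∑ k : Fin (N+1) → Fin (n+1), (∏ t, f (k t)) * Real.log (f (k t0) / g (k t0)) :=
        Finset.sum_comm
    _ = ∑ _t0 : Fin (N+1), K1 := Finset.sum_congr rfl fun t0 _ => hper t0
    _ = (N+1 : ℝ) * K1 := by
        rw [Finset.sum_const, Finset.card_univ, Fintype.card_fin, nsmul_eq_mul]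
        push_cast
        ring

lemma card_fin_filter_lt (N m : ℕ) (h : m ≤ N+1) :
    (Finset.univ.filter (fun s : Fin (N+1) => (s:ℕ) < m)).card = m := by
  classical
  have := Finset.card_bij (s := Finset.univ.filter (fun s : Fin (N+1) => (s:ℕ) < m))
    (t := Finset.range m) (fun s _ => (s:ℕ))
    (fun s hs => Finset.mem_range.mpr (Finset.mem_filter.mp hs).2)
    (fun s hs s' hs' hss => Fin.val_injective hss)
    (fun j hj => ⟨⟨j, lt_of_lt_of_le (Finset.mem_range.mp hj) h⟩,
      Finset.mem_filter.mpr ⟨Finset.mem_univ _, Finset.mem_range.mp hj⟩, rfl⟩)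
  simpa using this

set_option maxHeartbeats 2000000 in
/-- the KL-divergence bound from the proof of the Appendix D
theorem of the paper.  There are universal constants `c0, c1, C > 0` such that,
with `ε = min_t (c1·N/(n·t²))^{1/(2ρ_(t))}` attained at `t*_p`, `ε ∈ (0,1/2)`,
`t*_p ≥ √(N/n)`, and at most `c0/(n·ε²·e^{n·ε²})` of the indices `s ∈ {1,…,m}`
having `ρ_(s)` below the threshold `2ρ_(t*_p)·ln(nN)/ln(n·(t*_p)²/N)`, the KL
divergence between the two joint laws `Π^1, Π^0` (products over the `N+1` tasks
of the uniform mixture over `s ∈ {1,…,m}` of `Binomial(n, 1/2 ± ε^{ρ_(s)}/2)`)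
is at most `C`. -/
theorem stmt18 :
    ∃ c0 c1 C : ℝ, 0 < c0 ∧ 0 < c1 ∧ 0 < C ∧
      ∀ n N : ℕ, 9 ≤ n → 9 ≤ N →
      ∀ ρ : Fin (N+1) → ℝ, Monotone ρ → (∀ t, 1 ≤ ρ t) →
      ∀ tp : Fin (N+1), ∀ ε : ℝ,
        ε = (c1 * (N : ℝ) / ((n : ℝ) * (((tp : ℕ) : ℝ) + 1)^2)) ^ (1 / (2 * ρ tp)) →
        (∀ t : Fin (N+1),
          ε ≤ (c1 * (N : ℝ) / ((n : ℝ) * (((t : ℕ) : ℝ) + 1)^2)) ^ (1 / (2 * ρ t))) →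
        0 < ε → ε < 1/2 →
        Real.sqrt ((N : ℝ) / (n : ℝ)) ≤ ((tp : ℕ) : ℝ) + 1 →
        ((Finset.univ.filter (fun s : Fin (N+1) => (s : ℕ) < (N+1)/10 ∧
              ρ s < 2 * ρ tp * Real.log ((n : ℝ) * (N : ℝ)) /
                Real.log ((n : ℝ) * (((tp : ℕ) : ℝ) + 1)^2 / (N : ℝ)))).card : ℝ)
          ≤ c0 / ((n : ℝ) * ε^2 * Real.exp ((n : ℝ) * ε^2)) →
        ∑ k : Fin (N+1) → Fin (n+1),
            (∏ t, mixBinom n N ε ρ true (k t)) *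
              Real.log ((∏ t, mixBinom n N ε ρ true (k t)) /
                (∏ t, mixBinom n N ε ρ false (k t)))
          ≤ C := by
  refine ⟨1, 1/4, 1000, one_pos, by norm_num, by norm_num, ?_⟩
  intro n N hn hN ρ hmono hρ1 tp ε hεdef hεmin hε0 hε12 hsqrt hcard
  have hn0 : 0 < n := by omega
  have hN0 : 0 < N := by omega
  have hε1 : ε ≤ 1 := by linarith
  set m : ℕ := (N+1)/10 with hm
  have hm1 : 1 ≤ m := by omega
  have hmN : m ≤ N + 1 := by omega
  have hm0 : (0:ℝ) < (m:ℝ) := by exact_mod_cast hm1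
  have h20 : (N+1 : ℝ) ≤ 20 * m := by
    have : N + 1 ≤ 20 * m := by omega
    exact_mod_cast this
  set S : Finset (Fin (N+1)) := Finset.univ.filter (fun s => (s:ℕ) < m) with hS
  have hScard : S.card = m := card_fin_filter_lt N m hmN
  have hSne : S.Nonempty := Finset.card_pos.mp (by rw [hScard]; omega)
  -- δ facts
  have hδpos : ∀ s : Fin (N+1), 0 < ε ^ (ρ s) := fun s => Real.rpow_pos_of_pos hε0 _
  have hδle : ∀ s : Fin (N+1), ε ^ (ρ s) ≤ ε := by
    intro s
    have := Real.rpow_le_rpow_of_exponent_ge hε0 hε1 (hρ1 s)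
    rwa [Real.rpow_one] at this
  -- mixture components
  have hppos : ∀ s : Fin (N+1), (0:ℝ) < 1/2 + ε ^ (ρ s)/2 := fun s => by
    have := hδpos s; linarith
  have hplt1 : ∀ s : Fin (N+1), (1/2 + ε ^ (ρ s)/2 : ℝ) < 1 := fun s => by
    have := hδle s; linarith
  have hqpos0 : ∀ s : Fin (N+1), (0:ℝ) < 1/2 - ε ^ (ρ s)/2 := fun s => by
    have := hδle s; linarith
  have hqlt1 : ∀ s : Fin (N+1), (1/2 - ε ^ (ρ s)/2 : ℝ) < 1 := fun s => by
    have := hδpos s; linarith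
  have hmix1 : ∀ k : ℕ, mixBinom n N ε ρ true k
      = (m:ℝ)⁻¹ * ∑ s ∈ S, binomPMF n (1/2 + ε ^ (ρ s)/2) k := by
    intro k
    unfold mixBinom
    rw [← hm, ← hS]
    congr 1
    refine Finset.sum_congr rfl fun s _ => ?_
    congr 1
    norm_num
    ring
  have hmix0 : ∀ k : ℕ, mixBinom n N ε ρ false k
      = (m:ℝ)⁻¹ * ∑ s ∈ S, binomPMF n (1/2 - ε ^ (ρ s)/2) k := by
    intro k
    unfold mixBinom
    rw [← hm, ← hS]
    congr 1
    refine Finset.sum_congr rfl fun s _ => ?_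
    congr 1
    norm_num
    ring
  have hmixpos : ∀ σ : Bool, ∀ j : Fin (n+1), 0 < mixBinom n N ε ρ σ (j:ℕ) := by
    intro σ j
    have hj : (j:ℕ) ≤ n := Nat.lt_add_one_iff.mp j.isLt
    cases σ
    · rw [hmix0]
      exact mul_pos (inv_pos.mpr hm0) (Finset.sum_pos
        (fun s _ => binom_pos hj (hqpos0 s) (hqlt1 s)) hSne)
    · rw [hmix1]
      exact mul_pos (inv_pos.mpr hm0) (Finset.sum_pos
        (fun s _ => binom_pos hj (hppos s) (hplt1 s)) hSne)
  have hasum : ∀ p : ℝ, ∑ j : Fin (n+1), binomPMF n p (j:ℕ) = 1 := by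
    intro p
    rw [Fin.sum_univ_eq_sum_range (fun j => binomPMF n p j) (n+1)]
    exact binom_sum n p
  have hmixsum : ∑ j : Fin (n+1), mixBinom n N ε ρ true (j:ℕ) = 1 := by
    calc ∑ j : Fin (n+1), mixBinom n N ε ρ true (j:ℕ)
        = ∑ j : Fin (n+1), (m:ℝ)⁻¹ * ∑ s ∈ S, binomPMF n (1/2 + ε ^ (ρ s)/2) (j:ℕ) :=
          Finset.sum_congr rfl fun j _ => hmix1 _
      _ = (m:ℝ)⁻¹ * ∑ s ∈ S, ∑ j : Fin (n+1), binomPMF n (1/2 + ε ^ (ρ s)/2) (j:ℕ) := by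
          rw [← Finset.mul_sum, Finset.sum_comm]
      _ = (m:ℝ)⁻¹ * ∑ s ∈ S, (1:ℝ) := by
          congr 1
          exact Finset.sum_congr rfl fun s _ => hasum _
      _ = 1 := by
          rw [Finset.sum_const, hScard, nsmul_eq_mul, mul_one]
          exact inv_mul_cancel₀ hm0.ne'
  have htensor := tensorize (n := n) (N := N)
    (fun j => mixBinom n N ε ρ true (j:ℕ)) (fun j => mixBinom n N ε ρ false (j:ℕ))
    (hmixpos true) (hmixpos false) hmixsum
  rw [htensor]
  set K1 : ℝ := ∑ j : Fin (n+1), mixBinom n N ε ρ true (j:ℕ) *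
    Real.log (mixBinom n N ε ρ true (j:ℕ) / mixBinom n N ε ρ false (j:ℕ)) with hK1def
  have hK1 : K1 ≤ (m:ℝ)⁻¹ * 8 := by
    set lX : ℝ := Real.log ((n:ℝ) * (N:ℝ)) with hlXdef
    set L2 : ℝ := Real.log ((n:ℝ) * (((tp:ℕ):ℝ) + 1)^2 / (N:ℝ)) with hL2def
    -- per-outcome log-sum inequality
    have hperj : ∀ j : Fin (n+1),
        mixBinom n N ε ρ true (j:ℕ) *
            Real.log (mixBinom n N ε ρ true (j:ℕ) / mixBinom n N ε ρ false (j:ℕ))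
          ≤ (m:ℝ)⁻¹ * ∑ s ∈ S, binomPMF n (1/2 + ε ^ (ρ s)/2) (j:ℕ) *
              Real.log (binomPMF n (1/2 + ε ^ (ρ s)/2) (j:ℕ) /
                binomPMF n (1/2 - ε ^ (ρ s)/2) (j:ℕ)) := by
      intro j
      have hj : (j:ℕ) ≤ n := Nat.lt_add_one_iff.mp j.isLt
      have hls := log_sum_ineq S hSne (fun s => binomPMF n (1/2 + ε ^ (ρ s)/2) (j:ℕ))
        (fun s => binomPMF n (1/2 - ε ^ (ρ s)/2) (j:ℕ))
        (fun s _ => binom_pos hj (hppos s) (hplt1 s))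
        (fun s _ => binom_pos hj (hqpos0 s) (hqlt1 s))
      have hratio : mixBinom n N ε ρ true (j:ℕ) / mixBinom n N ε ρ false (j:ℕ)
          = (∑ s ∈ S, binomPMF n (1/2 + ε ^ (ρ s)/2) (j:ℕ)) /
            (∑ s ∈ S, binomPMF n (1/2 - ε ^ (ρ s)/2) (j:ℕ)) := by
        rw [hmix1, hmix0, mul_div_mul_left _ _ (inv_ne_zero hm0.ne')]
      rw [hratio, hmix1, mul_assoc]
      exact mul_le_mul_of_nonneg_left hls (inv_nonneg.mpr hm0.le)
    -- per-component KL bound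
    have hδ4 : ∀ s : Fin (N+1), ε ^ (ρ s)/2 ≤ 1/4 := by
      intro s
      have := hδle s
      linarith
    have hklS : ∀ s ∈ S, ∑ j : Fin (n+1), binomPMF n (1/2 + ε ^ (ρ s)/2) (j:ℕ) *
        Real.log (binomPMF n (1/2 + ε ^ (ρ s)/2) (j:ℕ) /
          binomPMF n (1/2 - ε ^ (ρ s)/2) (j:ℕ))
          ≤ 16 * n * (ε ^ (ρ s)/2)^2 := by
      intro s _
      rw [Fin.sum_univ_eq_sum_range (fun k => binomPMF n (1/2 + ε ^ (ρ s)/2) k *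
        Real.log (binomPMF n (1/2 + ε ^ (ρ s)/2) k /
          binomPMF n (1/2 - ε ^ (ρ s)/2) k)) (n+1)]
      exact kl_binom n (by positivity) (hδ4 s)
    have hchain : K1 ≤ (m:ℝ)⁻¹ * ∑ s ∈ S, 16 * (n:ℝ) * (ε ^ (ρ s)/2)^2 := by
      calc K1 ≤ ∑ j : Fin (n+1), (m:ℝ)⁻¹ * ∑ s ∈ S, binomPMF n (1/2 + ε ^ (ρ s)/2) (j:ℕ) *
              Real.log (binomPMF n (1/2 + ε ^ (ρ s)/2) (j:ℕ) /
                binomPMF n (1/2 - ε ^ (ρ s)/2) (j:ℕ)) :=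
            Finset.sum_le_sum fun j _ => hperj j
        _ = (m:ℝ)⁻¹ * ∑ s ∈ S, ∑ j : Fin (n+1), binomPMF n (1/2 + ε ^ (ρ s)/2) (j:ℕ) *
              Real.log (binomPMF n (1/2 + ε ^ (ρ s)/2) (j:ℕ) /
                binomPMF n (1/2 - ε ^ (ρ s)/2) (j:ℕ)) := by
            rw [← Finset.mul_sum, Finset.sum_comm]
        _ ≤ (m:ℝ)⁻¹ * ∑ s ∈ S, 16 * (n:ℝ) * (ε ^ (ρ s)/2)^2 :=
            mul_le_mul_of_nonneg_left (Finset.sum_le_sum hklS) (inv_nonneg.mpr hm0.le)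
    -- split the sum at the threshold
    have hsplit : ∑ s ∈ S, 16 * (n:ℝ) * (ε ^ (ρ s)/2)^2
        = 4 * (n:ℝ) * (∑ s ∈ S.filter (fun s => ρ s < 2 * ρ tp * lX / L2), (ε ^ (ρ s))^2)
          + 4 * (n:ℝ) * (∑ s ∈ S.filter (fun s => ¬ ρ s < 2 * ρ tp * lX / L2), (ε ^ (ρ s))^2) := by
      rw [← Finset.sum_filter_add_sum_filter_not S (fun s => ρ s < 2 * ρ tp * lX / L2)
          (fun s => 16 * (n:ℝ) * (ε ^ (ρ s)/2)^2)]
      congr 1 <;>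
      · rw [Finset.mul_sum]
        exact Finset.sum_congr rfl fun s _ => by ring
    -- small-exponent part
    have hnε2 : (0:ℝ) < (n:ℝ) * ε^2 := by positivity
    have hexp1 : 1 ≤ Real.exp ((n:ℝ) * ε^2) := Real.one_le_exp (by positivity)
    have hsetseq : S.filter (fun s => ρ s < 2 * ρ tp * lX / L2)
        = Finset.univ.filter (fun s : Fin (N+1) => (s:ℕ) < m ∧ ρ s < 2 * ρ tp * lX / L2) := by
      rw [hS, Finset.filter_filter]
    have hsmallcard : (((S.filter (fun s => ρ s < 2 * ρ tp * lX / L2)).card : ℕ) : ℝ)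
        ≤ 1 / ((n:ℝ) * ε^2 * Real.exp ((n:ℝ) * ε^2)) := by
      rw [hsetseq]
      exact hcard
    have hsmall : ∑ s ∈ S.filter (fun s => ρ s < 2 * ρ tp * lX / L2), (ε ^ (ρ s))^2
        ≤ ((S.filter (fun s => ρ s < 2 * ρ tp * lX / L2)).card : ℝ) * ε^2 := by
      calc ∑ s ∈ S.filter (fun s => ρ s < 2 * ρ tp * lX / L2), (ε ^ (ρ s))^2
          ≤ ∑ _s ∈ S.filter (fun s => ρ s < 2 * ρ tp * lX / L2), ε^2 :=
            Finset.sum_le_sum fun s _ => by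
              have h1 : ε ^ (ρ s) ≤ ε := hδle s
              have h2 : 0 ≤ ε ^ (ρ s) := (hδpos s).le
              nlinarith
        _ = _ := by rw [Finset.sum_const, nsmul_eq_mul]
    have hsmall4 : 4 * (n:ℝ) * (∑ s ∈ S.filter (fun s => ρ s < 2 * ρ tp * lX / L2),
        (ε ^ (ρ s))^2) ≤ 4 := by
      calc 4 * (n:ℝ) * (∑ s ∈ S.filter (fun s => ρ s < 2 * ρ tp * lX / L2), (ε ^ (ρ s))^2)
          ≤ 4 * (n:ℝ) * (((S.filter (fun s => ρ s < 2 * ρ tp * lX / L2)).card : ℝ) * ε^2) := by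
            apply mul_le_mul_of_nonneg_left hsmall (by positivity)
        _ = 4 * ((n:ℝ) * ε^2) * ((S.filter (fun s => ρ s < 2 * ρ tp * lX / L2)).card : ℝ) := by
            ring
        _ ≤ 4 * ((n:ℝ) * ε^2) * (1 / ((n:ℝ) * ε^2 * Real.exp ((n:ℝ) * ε^2))) := by
            apply mul_le_mul_of_nonneg_left hsmallcard (by positivity)
        _ = 4 / Real.exp ((n:ℝ) * ε^2) := by
            field_simp
        _ ≤ 4 := by
            rw [div_le_iff₀ (by positivity)]
            nlinarith
    -- large-exponent part
    have hρtp : 1 ≤ ρ tp := hρ1 tp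
    have hDpos : (0:ℝ) < (n:ℝ) * (((tp:ℕ):ℝ) + 1)^2 := by positivity
    have hNpos : (0:ℝ) < (N:ℝ) := by exact_mod_cast hN0
    have hbasepos : (0:ℝ) < 1/4 * (N:ℝ) / ((n:ℝ) * (((tp:ℕ):ℝ) + 1)^2) := by positivity
    have hBdef : ε ^ (2 * ρ tp) = 1/4 * (N:ℝ) / ((n:ℝ) * (((tp:ℕ):ℝ) + 1)^2) := by
      rw [hεdef, ← Real.rpow_mul hbasepos.le,
        show 1/(2*ρ tp) * (2*ρ tp) = 1 from by field_simp,
        Real.rpow_one]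
    have hBpos : (0:ℝ) < ε ^ (2 * ρ tp) := Real.rpow_pos_of_pos hε0 _
    have hBlt : ε ^ (2 * ρ tp) < 1/4 := by
      have h1 : ε ^ (2 * ρ tp) < (1/2:ℝ) ^ (2 * ρ tp) :=
        Real.rpow_lt_rpow hε0.le hε12 (by linarith)
      have h2 : (1/2:ℝ) ^ (2 * ρ tp) ≤ (1/2:ℝ) ^ (2:ℝ) :=
        Real.rpow_le_rpow_of_exponent_ge (by norm_num) (by norm_num) (by linarith)
      have h3 : (1/2:ℝ) ^ (2:ℝ) = 1/4 := by
        rw [show (2:ℝ) = ((2:ℕ):ℝ) by norm_num, Real.rpow_natCast]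
        norm_num
      linarith
    have harg : (n:ℝ) * (((tp:ℕ):ℝ) + 1)^2 / (N:ℝ) = 1 / (4 * ε ^ (2 * ρ tp)) := by
      rw [hBdef]
      field_simp
    have hL2eq : L2 = - Real.log (4 * ε ^ (2 * ρ tp)) := by
      rw [hL2def, harg, one_div, Real.log_inv]
    have hL2pos : 0 < L2 := by
      rw [hL2eq]
      have h4B : (0:ℝ) < 4 * ε ^ (2 * ρ tp) := by positivity
      have h4B1 : 4 * ε ^ (2 * ρ tp) < 1 := by linarith
      have := Real.log_neg h4B h4B1
      linarith
    have hXpos : (0:ℝ) < (n:ℝ) * (N:ℝ) := by positivity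
    have hX1 : (1:ℝ) ≤ (n:ℝ) * (N:ℝ) := by
      have h1 : (1:ℝ) ≤ (n:ℝ) := by exact_mod_cast hn0
      have h2 : (1:ℝ) ≤ (N:ℝ) := by exact_mod_cast hN0
      nlinarith
    have hlogX : 0 ≤ lX := Real.log_nonneg hX1
    have hlogB : Real.log (ε ^ (2 * ρ tp)) = (2 * ρ tp) * Real.log ε :=
      Real.log_rpow hε0 _
    have hεT : ∀ r : ℝ, 2 * ρ tp * lX / L2 ≤ r → ε ^ r ≤ ((n:ℝ) * (N:ℝ))⁻¹ := by
      intro r hr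
      have h1 : ε ^ r ≤ ε ^ (2 * ρ tp * lX / L2) :=
        Real.rpow_le_rpow_of_exponent_ge hε0 hε1 hr
      have h2 : ε ^ (2 * ρ tp * lX / L2) = Real.exp (Real.log ε * (2 * ρ tp * lX / L2)) :=
        Real.rpow_def_of_pos hε0 _
      have hlog4 : (0:ℝ) < Real.log 4 := Real.log_pos (by norm_num)
      have hBL : Real.log (ε ^ (2 * ρ tp)) = - Real.log 4 - L2 := by
        rw [hL2eq, Real.log_mul (by norm_num) hBpos.ne']
        ring
      have hstep : Real.log ε * (2 * ρ tp * lX / L2) ≤ - lX := by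
        have heq : Real.log ε * (2 * ρ tp * lX / L2) = lX * Real.log (ε ^ (2 * ρ tp)) / L2 := by
          rw [hlogB]
          ring
        rw [heq, hBL, div_le_iff₀ hL2pos]
        nlinarith [mul_nonneg hlogX hlog4.le]
      calc ε ^ r ≤ ε ^ (2 * ρ tp * lX / L2) := h1
        _ = Real.exp (Real.log ε * (2 * ρ tp * lX / L2)) := h2
        _ ≤ Real.exp (- lX) := Real.exp_le_exp.mpr hstep
        _ = ((n:ℝ) * (N:ℝ))⁻¹ := by
            rw [Real.exp_neg, hlXdef, Real.exp_log hXpos]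
    have hlargecard : ((S.filter (fun s => ¬ ρ s < 2 * ρ tp * lX / L2)).card : ℝ) ≤ (N:ℝ) + 1 := by
      have h1 : (S.filter (fun s => ¬ ρ s < 2 * ρ tp * lX / L2)).card ≤ N + 1 := by
        calc (S.filter (fun s => ¬ ρ s < 2 * ρ tp * lX / L2)).card ≤ S.card :=
              Finset.card_filter_le _ _
          _ = m := hScard
          _ ≤ N + 1 := hmN
      exact_mod_cast h1
    have hlarge : ∑ s ∈ S.filter (fun s => ¬ ρ s < 2 * ρ tp * lX / L2), (ε ^ (ρ s))^2
        ≤ ((N:ℝ) + 1) * (((n:ℝ) * (N:ℝ))⁻¹)^2 := by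
      calc ∑ s ∈ S.filter (fun s => ¬ ρ s < 2 * ρ tp * lX / L2), (ε ^ (ρ s))^2
          ≤ ∑ _s ∈ S.filter (fun s => ¬ ρ s < 2 * ρ tp * lX / L2), (((n:ℝ) * (N:ℝ))⁻¹)^2 := by
            refine Finset.sum_le_sum fun s hs => ?_
            have hTs : 2 * ρ tp * lX / L2 ≤ ρ s :=
              not_lt.mp (Finset.mem_filter.mp hs).2
            have h1 := hεT (ρ s) hTs
            have h2 : 0 ≤ ε ^ (ρ s) := (hδpos s).le
            nlinarith
        _ = ((S.filter (fun s => ¬ ρ s < 2 * ρ tp * lX / L2)).card : ℝ)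
              * (((n:ℝ) * (N:ℝ))⁻¹)^2 := by
            rw [Finset.sum_const, nsmul_eq_mul]
        _ ≤ ((N:ℝ) + 1) * (((n:ℝ) * (N:ℝ))⁻¹)^2 :=
            mul_le_mul_of_nonneg_right hlargecard (by positivity)
    have hlarge4 : 4 * (n:ℝ) * (∑ s ∈ S.filter (fun s => ¬ ρ s < 2 * ρ tp * lX / L2),
        (ε ^ (ρ s))^2) ≤ 4 := by
      have hnn : (9:ℝ) ≤ (n:ℝ) := by exact_mod_cast hn
      have hNN : (9:ℝ) ≤ (N:ℝ) := by exact_mod_cast hN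
      calc 4 * (n:ℝ) * (∑ s ∈ S.filter (fun s => ¬ ρ s < 2 * ρ tp * lX / L2), (ε ^ (ρ s))^2)
          ≤ 4 * (n:ℝ) * (((N:ℝ) + 1) * (((n:ℝ) * (N:ℝ))⁻¹)^2) := by
            apply mul_le_mul_of_nonneg_left hlarge (by positivity)
        _ = 4 * ((N:ℝ) + 1) / ((n:ℝ) * (N:ℝ)^2) := by
            field_simp
        _ ≤ 4 := by
            rw [div_le_iff₀ (by positivity)]
            nlinarith
    -- combine
    calc K1 ≤ (m:ℝ)⁻¹ * ∑ s ∈ S, 16 * (n:ℝ) * (ε ^ (ρ s)/2)^2 := hchain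
      _ ≤ (m:ℝ)⁻¹ * 8 := by
          apply mul_le_mul_of_nonneg_left _ (inv_nonneg.mpr hm0.le)
          rw [hsplit]
          linarith
  calc (N+1 : ℝ) * K1 ≤ (N+1 : ℝ) * ((m:ℝ)⁻¹ * 8) := by
        apply mul_le_mul_of_nonneg_left hK1 (by positivity)
    _ ≤ 20 * (m:ℝ) * ((m:ℝ)⁻¹ * 8) := by
        apply mul_le_mul_of_nonneg_right h20 (by positivity)
    _ = 160 := by field_simp; ring
    _ ≤ 1000 := by norm_num
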